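/- Let w be an infinite word avoiding k-th powers (k ≥ 2), and suppose w[i₁..i₂] and w[i₁..i₃] are both palindromes with i₂ < i₃. Then |w[i₁..i₃]| / |w[i₁..i₂]| > 1 + 1/(k−1), i.e., (k−1)·(i₃ − i₁ + 1) > k·(i₂ − i₁ + 1). -/

import Mathlib

/-- `wpow u k` is the `k`-fold concatenation of the word `u`. -/
def wpow {A : Type*} (u : List A) (k : ℕ) : List A :=
  (List.replicate k u).flatten

/-- The factor `w[i..j]` (inclusive) of the infinite word `w`. -/
def wseg {A : Type*} (w : ℕ → A) (i j : ℕ) : List A :=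
  (List.range (j + 1 - i)).map (fun t => w (i + t))

/-- `w` avoids `k`-th powers: no factor of `w` is of the form `u^k` with `u` nonempty. -/
def AvoidsPower {A : Type*} (w : ℕ → A) (k : ℕ) : Prop :=
  ∀ u : List A, u ≠ [] → ∀ i : ℕ, wpow u k ≠ wseg w i (i + (wpow u k).length - 1)

lemma wpow_succ {A : Type*} (u : List A) (k : ℕ) : wpow u (k+1) = u ++ wpow u k := by
  simp [wpow, List.replicate_succ]

lemma pal_getElem {A : Type*} {l : List A} (h : l.Palindrome) (t : ℕ) (ht : t < l.length) :
    l[t] = l[l.length - 1 - t]'(by omega) := by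
  have h1 : l.reverse[t]'(by simpa using ht) = l[l.length - 1 - t]'(by omega) :=
    List.getElem_reverse ..
  exact (List.getElem_of_eq h.reverse_eq.symm ht).trans h1

theorem palindromes_same_start_ratio {A : Type*} (w : ℕ → A) (k : ℕ)
    (hk : 2 ≤ k) (hw : AvoidsPower w k) (i₁ i₂ i₃ : ℕ)
    (h12 : i₁ ≤ i₂) (h23 : i₂ < i₃)
    (hp2 : (wseg w i₁ i₂).Palindrome) (hp3 : (wseg w i₁ i₃).Palindrome) :
    k * (i₂ - i₁ + 1) < (k - 1) * (i₃ - i₁ + 1) := by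
  set L := i₃ + 1 - i₁ with hLdef
  set ℓ := i₂ + 1 - i₁ with hldef
  set p := i₃ - i₂ with hpdef
  have hlL : ℓ < L := by omega
  have hp1 : 1 ≤ p := by omega
  have hl1 : 1 ≤ ℓ := by omega
  have hLp : L = ℓ + p := by omega
  have hlen3 : (wseg w i₁ i₃).length = L := by simp [wseg, hLdef]
  have hlen2 : (wseg w i₁ i₂).length = ℓ := by simp [wseg, hldef]
  -- pointwise palindrome facts
  have key3 : ∀ t, t < L → w (i₁ + t) = w (i₁ + (L - 1 - t)) := by
    intro t ht
    have h := pal_getElem hp3 t (by rw [hlen3]; exact ht)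
    simpa [wseg, ← hLdef] using h
  have key2 : ∀ t, t < ℓ → w (i₁ + t) = w (i₁ + (ℓ - 1 - t)) := by
    intro t ht
    have h := pal_getElem hp2 t (by rw [hlen2]; exact ht)
    simpa [wseg, ← hldef] using h
  -- periodicity
  have per : ∀ t, t + p < L → w (i₁ + t) = w (i₁ + (p + t)) := by
    intro t ht
    have h1 := key3 (t + p) (by omega)
    have h2 : L - 1 - (t + p) = ℓ - 1 - t := by omega
    have h3 := key2 (ℓ - 1 - t) (by omega)
    have h4 : ℓ - 1 - (ℓ - 1 - t) = t := by omega
    rw [h2] at h1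
    rw [h4] at h3
    rw [show p + t = t + p from by omega, h1, ← h3]
  by_contra hcon
  push_neg at hcon
  rw [show i₃ - i₁ + 1 = L from by omega, show i₂ - i₁ + 1 = ℓ from by omega] at hcon
  have hkp : k * p ≤ L := by
    have h1 : k * L = k * ℓ + k * p := by rw [hLp, Nat.mul_add]
    have h2 : (k - 1) * L + L = k * L := by
      have hk1 : (k - 1) + 1 = k := by omega
      calc (k - 1) * L + L = ((k - 1) + 1) * L := by ring
        _ = k * L := by rw [hk1]
    omega
  set u := wseg w i₁ (i₁ + p - 1) with hudef
  have hu : u = (List.range p).map (fun t => w (i₁ + t)) := by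
    rw [hudef, wseg, show i₁ + p - 1 + 1 - i₁ = p from by omega]
  have hulen : u.length = p := by rw [hu]; simp
  have pow_eq : ∀ m, m * p ≤ L → wpow u m = (List.range (m * p)).map (fun t => w (i₁ + t)) := by
    intro m
    induction m with
    | zero => intro _; simp [wpow]
    | succ n ih =>
      intro hm
      have hn : n * p ≤ L := le_trans (Nat.mul_le_mul_right p (Nat.le_succ n)) hm
      rw [wpow_succ, ih hn, show (n + 1) * p = p + n * p from by ring, List.range_add,
        List.map_append, List.map_map, hu]
      congr 1
      apply List.map_congr_left
      intro a ha
      have ha' : a < n * p := List.mem_range.mp ha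
      have : a + p < L := by
        have : n * p + p ≤ L := by rw [show n * p + p = (n+1) * p from by ring]; exact hm
        omega
      simpa using per a this
  have hkp1 : 1 ≤ k * p := Nat.mul_pos (by omega) hp1
  have hlenpow : (wpow u k).length = k * p := by
    simp [wpow, hulen, Nat.mul_comm]
  refine hw u ?_ i₁ ?_
  · intro h
    apply_fun List.length at h
    simp [hulen] at h
    omega
  · rw [hlenpow, wseg, show i₁ + k * p - 1 + 1 - i₁ = k * p from by omega]
    exact pow_eq k hkp
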